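/- Let f be continuous and π-periodic and suppose ḡ ∈ 𝒞 minimizes ‖f − g‖_∞ over g ∈ 𝒞. Then there exist points φ₁ < ψ₁ < φ₂ < ψ₂ < φ₁ + π with f(φᵢ) − ḡ(φᵢ) = ‖f − ḡ‖_∞ and ḡ(ψᵢ) − f(ψᵢ) = ‖f − ḡ‖_∞ for i = 1, 2. -/

import Mathlib

open Real

def EllipseLog : Set (ℝ → ℝ) :=
  {g | ∃ a b c : ℝ, 0 < a ∧ b ^ 2 + c ^ 2 < a ^ 2 ∧
    g = fun φ => -(1 / 2) * log (a + b * cos (2 * φ) + c * sin (2 * φ))}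

noncomputable def supDist (f g : ℝ → ℝ) : ℝ := ⨆ φ, |f φ - g φ|

lemma contD (a b c : ℝ) : Continuous fun φ : ℝ => a + b * cos (2*φ) + c * sin (2*φ) := by
  fun_prop

lemma perD (a b c : ℝ) : Function.Periodic (fun φ : ℝ => a + b * cos (2*φ) + c * sin (2*φ)) π := by
  intro x
  have h2 : 2*(x+π) = 2*x + 2*π := by ring
  simp only [h2, Real.cos_add_two_pi, Real.sin_add_two_pi]

lemma absLin (b c θ : ℝ) : -Real.sqrt (b^2+c^2) ≤ b * cos θ + c * sin θ := by
  have h1 : (b * cos θ + c * sin θ)^2 ≤ b^2 + c^2 := by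
    nlinarith [sin_sq_add_cos_sq θ, sq_nonneg (b * sin θ - c * cos θ)]
  have h2 : |b * cos θ + c * sin θ| ≤ Real.sqrt (b^2+c^2) := by
    rw [← Real.sqrt_sq_eq_abs]; exact Real.sqrt_le_sqrt h1
  linarith [neg_abs_le (b * cos θ + c * sin θ)]

lemma exists_angle (x y : ℝ) (h : x^2 + y^2 = 1) : ∃ θ : ℝ, cos θ = x ∧ sin θ = y := by
  have hx1 : -1 ≤ x := by nlinarith [sq_nonneg y]
  have hx2 : x ≤ 1 := by nlinarith [sq_nonneg y]
  rcases le_or_gt 0 y with hy | hy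
  · exact ⟨Real.arccos x, Real.cos_arccos hx1 hx2, by
      rw [Real.sin_arccos]
      rw [show 1 - x^2 = y^2 by linarith, Real.sqrt_sq hy]⟩
  · refine ⟨-Real.arccos x, by rw [Real.cos_neg]; exact Real.cos_arccos hx1 hx2, ?_⟩
    rw [Real.sin_neg, Real.sin_arccos, show 1 - x^2 = y^2 by linarith,
      Real.sqrt_sq_eq_abs, abs_of_neg hy]; ring

lemma mem_of_pos (a b c : ℝ) (hpos : ∀ φ : ℝ, 0 < a + b * cos (2*φ) + c * sin (2*φ)) :
    (fun φ : ℝ => -(1 / 2) * log (a + b * cos (2 * φ) + c * sin (2 * φ))) ∈ EllipseLog := by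
  have key : b^2 + c^2 < a^2 ∧ 0 < a := by
    by_cases hbc : b^2 + c^2 = 0
    · have hb : b = 0 := by nlinarith [sq_nonneg b, sq_nonneg c]
      have hc : c = 0 := by nlinarith [sq_nonneg b, sq_nonneg c]
      have := hpos 0
      simp [hb, hc] at this
      constructor
      · rw [hbc]; positivity
      · exact this
    · have hs2 : 0 < b^2 + c^2 := lt_of_le_of_ne (by positivity) (Ne.symm hbc)
      set s := Real.sqrt (b^2 + c^2) with hs
      have hs0 : 0 < s := Real.sqrt_pos.mpr hs2
      have hss : s^2 = b^2 + c^2 := Real.sq_sqrt (le_of_lt hs2)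
      obtain ⟨θ, hcos, hsin⟩ : ∃ θ : ℝ, cos θ = -b/s ∧ sin θ = -c/s := by
        apply exists_angle
        field_simp
        linarith [hss]
      have h := hpos (θ/2)
      rw [show 2*(θ/2) = θ by ring, hcos, hsin] at h
      have hbs : b * (-b/s) + c * (-c/s) = -s := by
        field_simp
        nlinarith [hss]
      rw [show a + b * (-b/s) + c * (-c/s) = a + (b * (-b/s) + c * (-c/s)) by ring, hbs] at h
      have hsa : s < a := by linarith
      constructor
      · nlinarith
      · linarith
  exact ⟨a, b, c, key.2, key.1, rfl⟩

lemma periodic_max (h : ℝ → ℝ) (hc : Continuous h) (hp : Function.Periodic h π) (w : ℝ) :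
    ∃ x ∈ Set.Icc w (w + π), (∀ y, h y ≤ h x) ∧ (⨆ φ, h φ) = h x := by
  obtain ⟨x, hx, hmax⟩ := (isCompact_Icc (a := w) (b := w + π)).exists_isMaxOn
    (Set.nonempty_Icc.mpr (by linarith [pi_pos])) hc.continuousOn
  have hb : ∀ y, h y ≤ h x := by
    intro y
    obtain ⟨z, hz, hzy⟩ := hp.exists_mem_Ico pi_pos y w
    rw [hzy]
    exact hmax (Set.mem_of_mem_of_subset hz Set.Ico_subset_Icc_self)
  refine ⟨x, hx, hb, le_antisymm (ciSup_le hb) ?_⟩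
  exact le_ciSup ⟨h x, by rintro _ ⟨y, rfl⟩; exact hb y⟩ x

lemma alternance_sep (r : ℝ → ℝ) (hrcont : Continuous r) (hrper : Function.Periodic r π)
    (d : ℝ) (hd : 0 < d) (hrd : ∀ y, |r y| ≤ d)
    (p q0 : ℝ) (hEp : r p = d) (hEq : r q0 = -d)
    (hno : ∀ φ₁ ψ₁ φ₂ ψ₂ : ℝ, φ₁ < ψ₁ → ψ₁ < φ₂ → φ₂ < ψ₂ → ψ₂ < φ₁ + π →
      r φ₁ = d → r φ₂ = d → r ψ₁ = -d → r ψ₂ = -d → False) :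
    ∃ z₁ z₂ η : ℝ, 0 < η ∧ η ≤ d/2 ∧ z₁ < z₂ ∧ z₂ < z₁ + π ∧
      (∀ x ∈ Set.Icc z₁ (z₁+π), d - η < r x → cos (2*x - (z₁+z₂)) - cos (z₂-z₁) < 0) ∧
      (∀ x ∈ Set.Icc z₁ (z₁+π), r x < -d + η → 0 < cos (2*x - (z₁+z₂)) - cos (z₂-z₁)) := by
  have hdd : d ≠ -d := by intro h; linarith
  have hrsub : ∀ x : ℝ, r (x - π) = r x := by
    intro x
    have := hrper (x - π)
    rw [sub_add_cancel] at this
    exact this.symm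
  -- the set of maximum points in a window starting at q0
  set S : Set ℝ := Set.Icc q0 (q0 + π) ∩ {x | r x = d} with hS_def
  have hScl : IsClosed S := isClosed_Icc.inter (isClosed_eq hrcont continuous_const)
  have hScpt : IsCompact S := isCompact_Icc.of_isClosed_subset hScl Set.inter_subset_left
  obtain ⟨k, hk, -⟩ := existsUnique_add_zsmul_mem_Ico pi_pos p q0
  have hp' : r (p + k • π) = d := by rw [hrper.zsmul k p, hEp]
  have hSne : S.Nonempty := ⟨p + k • π, Set.mem_of_mem_of_subset hk Set.Ico_subset_Icc_self, hp'⟩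
  set u : ℝ := sInf S with hu_def
  set v : ℝ := sSup S with hv_def
  have hu : u ∈ S := hScpt.sInf_mem hSne
  have hv : v ∈ S := hScpt.sSup_mem hSne
  have huv : u ≤ v := le_trans (csInf_le hScpt.bddBelow hu) (le_csSup hScpt.bddAbove hu)
  have hud : r u = d := hu.2
  have hvd : r v = d := hv.2
  have hq0u : q0 < u := by
    rcases lt_or_eq_of_le hu.1.1 with h | h
    · exact h
    · exfalso
      have h2 : r q0 = d := by rw [h]; exact hud
      rw [hEq] at h2
      linarith
  have hrq0π : r (q0 + π) = -d := by rw [hrper q0, hEq]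
  have hvq0 : v < q0 + π := by
    rcases lt_or_eq_of_le hv.1.2 with h | h
    · exact h
    · exfalso
      have h2 : r v = -d := by rw [h]; exact hrq0π
      rw [hvd] at h2
      linarith
  -- no maximum point strictly between v and u + π (mod period)
  have hA : ∀ x, v < x → x < u + π → r x ≠ d := by
    intro x hvx hxu hrx
    rcases lt_or_ge x (q0 + π) with h1 | h1
    · have hxS : x ∈ S := ⟨⟨by linarith, le_of_lt h1⟩, hrx⟩
      have := le_csSup hScpt.bddAbove hxS
      linarith
    · have hxS : x - π ∈ S := by
        refine ⟨⟨by linarith, by linarith⟩, ?_⟩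
        show r (x - π) = d
        rw [hrsub x]; exact hrx
      have := csInf_le hScpt.bddBelow hxS
      linarith
  -- no minimum point strictly between u and v
  have hB : ∀ x, u < x → x < v → r x ≠ -d := by
    intro x hux hxv hrx
    exact hno u x v (q0 + π) hux hxv (by linarith) (by linarith) hud hvd hrx hrq0π
  -- minimum points in the window [v, u + π]
  set Bc : Set ℝ := Set.Icc v (u + π) ∩ {x | r x = -d} with hBc_def
  have hBcl : IsClosed Bc := isClosed_Icc.inter (isClosed_eq hrcont continuous_const)
  have hBcpt : IsCompact Bc := isCompact_Icc.of_isClosed_subset hBcl Set.inter_subset_left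
  have hBne : Bc.Nonempty := ⟨q0 + π, ⟨⟨le_of_lt hvq0, by linarith⟩, hrq0π⟩⟩
  set w₁ : ℝ := sInf Bc with hw₁_def
  set w₂ : ℝ := sSup Bc with hw₂_def
  have hw₁ : w₁ ∈ Bc := hBcpt.sInf_mem hBne
  have hw₂ : w₂ ∈ Bc := hBcpt.sSup_mem hBne
  have hw₁₂ : w₁ ≤ w₂ := le_trans (csInf_le hBcpt.bddBelow hw₁) (le_csSup hBcpt.bddAbove hw₁)
  have hw₁d : r w₁ = -d := hw₁.2
  have hw₂d : r w₂ = -d := hw₂.2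
  have hvw₁ : v < w₁ := by
    rcases lt_or_eq_of_le hw₁.1.1 with h | h
    · exact h
    · exfalso
      have h2 : r v = -d := by rw [h]; exact hw₁d
      rw [hvd] at h2
      linarith
  have hruπ : r (u + π) = d := by rw [hrper u]; exact hud
  have hw₂u : w₂ < u + π := by
    rcases lt_or_eq_of_le hw₂.1.2 with h | h
    · exact h
    · exfalso
      have h2 : r (u + π) = -d := by rw [← h]; exact hw₂d
      rw [hruπ] at h2
      linarith
  set z₁ : ℝ := (v + w₁) / 2 with hz₁_def
  set z₂ : ℝ := (w₂ + (u + π)) / 2 with hz₂_def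
  have hvz₁ : v < z₁ := by rw [hz₁_def]; linarith
  have hz₁w₁ : z₁ < w₁ := by rw [hz₁_def]; linarith
  have hw₂z₂ : w₂ < z₂ := by rw [hz₂_def]; linarith
  have hz₂u : z₂ < u + π := by rw [hz₂_def]; linarith
  have hz₁₂ : z₁ < z₂ := by linarith
  have hz₂₁ : z₂ < z₁ + π := by rw [hz₁_def, hz₂_def]; linarith
  -- the sign pattern of q x = cos (2x - (z₁+z₂)) - cos (z₂ - z₁)
  have hq_eq : ∀ x : ℝ, cos (2*x - (z₁+z₂)) - cos (z₂-z₁) = -2 * sin (x - z₁) * sin (x - z₂) := by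
    intro x
    rw [show 2*x - (z₁+z₂) = ((x-z₁)+(x-z₂)) by ring,
      show z₂ - z₁ = ((x-z₁)-(x-z₂)) by ring, Real.cos_sub_cos,
      show ((x-z₁)+(x-z₂)+((x-z₁)-(x-z₂)))/2 = x - z₁ by ring,
      show ((x-z₁)+(x-z₂)-((x-z₁)-(x-z₂)))/2 = x - z₂ by ring]
  have hqpos : ∀ x, z₁ < x → x < z₂ → 0 < cos (2*x - (z₁+z₂)) - cos (z₂-z₁) := by
    intro x h1 h2
    rw [hq_eq x]
    have hs1 : 0 < sin (x - z₁) := Real.sin_pos_of_pos_of_lt_pi (by linarith) (by linarith)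
    have hs2 : sin (x - z₂) < 0 := Real.sin_neg_of_neg_of_neg_pi_lt (by linarith) (by linarith)
    nlinarith
  have hqneg : ∀ x, z₂ < x → x < z₁ + π → cos (2*x - (z₁+z₂)) - cos (z₂-z₁) < 0 := by
    intro x h1 h2
    rw [hq_eq x]
    have hs1 : 0 < sin (x - z₁) := Real.sin_pos_of_pos_of_lt_pi (by linarith) (by linarith)
    have hs2 : 0 < sin (x - z₂) := Real.sin_pos_of_pos_of_lt_pi (by linarith) (by linarith)
    nlinarith
  -- location of maximum points within the window [z₁, z₁ + π]
  have hAK : ∀ x ∈ Set.Icc z₁ (z₁+π), r x = d → z₂ < x ∧ x < z₁ + π := by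
    intro x hx hrx
    have hxz₁ : z₁ ≤ x := hx.1
    have h1 : u + π ≤ x := by
      by_contra h
      push_neg at h
      exact hA x (by linarith) h hrx
    have h2 : x < z₁ + π := by
      rcases lt_or_eq_of_le hx.2 with h | h
      · exact h
      · exfalso
        have h5 := hrper z₁
        rw [← h] at h5
        rw [hrx] at h5
        exact hA z₁ hvz₁ (by linarith) h5.symm
    exact ⟨by linarith, h2⟩
  -- location of minimum points within the window [z₁, z₁ + π]
  have hBK : ∀ x ∈ Set.Icc z₁ (z₁+π), r x = -d → z₁ < x ∧ x < z₂ := by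
    intro x hx hrx
    rcases le_or_gt x (u + π) with h1 | h1
    · have hxBc : x ∈ Bc := ⟨⟨by linarith [hx.1], h1⟩, hrx⟩
      have ha1 : w₁ ≤ x := csInf_le hBcpt.bddBelow hxBc
      have ha2 : x ≤ w₂ := le_csSup hBcpt.bddAbove hxBc
      exact ⟨by linarith, by linarith⟩
    · exfalso
      have hxπ : r (x - π) = -d := by rw [hrsub x]; exact hrx
      rcases lt_or_ge (x - π) v with h2 | h2
      · exact hB (x - π) (by linarith) h2 hxπ
      · have hxBc : x - π ∈ Bc := ⟨⟨h2, by linarith [hx.2]⟩, hxπ⟩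
        have h3 : w₁ ≤ x - π := csInf_le hBcpt.bddBelow hxBc
        have h4 : x - π ≤ z₁ := by linarith [hx.2]
        linarith
  -- uniform bounds via compactness
  have hqcont : Continuous fun x : ℝ => cos (2*x - (z₁+z₂)) - cos (z₂-z₁) := by fun_prop
  set K₁ : Set ℝ := Set.Icc z₁ (z₁+π) ∩ {x | 0 ≤ cos (2*x - (z₁+z₂)) - cos (z₂-z₁)} with hK₁_def
  have hK₁cpt : IsCompact K₁ := isCompact_Icc.of_isClosed_subset
    (isClosed_Icc.inter (isClosed_le continuous_const hqcont)) Set.inter_subset_left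
  have hK₁ne : K₁.Nonempty := ⟨w₁, ⟨by constructor <;> linarith, le_of_lt (hqpos w₁ hz₁w₁ (by linarith))⟩⟩
  obtain ⟨x₁, hx₁K, hx₁max⟩ := hK₁cpt.exists_isMaxOn hK₁ne hrcont.continuousOn
  have hx₁lt : r x₁ < d := by
    rcases lt_or_eq_of_le (le_trans (le_abs_self _) (hrd x₁)) with h | h
    · exact h
    · exfalso
      have := hAK x₁ hx₁K.1 h
      exact absurd hx₁K.2 (not_le.mpr (hqneg x₁ this.1 this.2))
  set K₂ : Set ℝ := Set.Icc z₁ (z₁+π) ∩ {x | cos (2*x - (z₁+z₂)) - cos (z₂-z₁) ≤ 0} with hK₂_def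
  have hK₂cpt : IsCompact K₂ := isCompact_Icc.of_isClosed_subset
    (isClosed_Icc.inter (isClosed_le hqcont continuous_const)) Set.inter_subset_left
  have hK₂ne : K₂.Nonempty := by
    refine ⟨(z₂ + (z₁ + π))/2, ⟨by constructor <;> linarith, le_of_lt (hqneg _ (by linarith) (by linarith))⟩⟩
  obtain ⟨x₂, hx₂K, hx₂min⟩ := hK₂cpt.exists_isMinOn hK₂ne hrcont.continuousOn
  have hx₂gt : -d < r x₂ := by
    rcases lt_or_eq_of_le (neg_le_of_abs_le (hrd x₂)) with h | h
    · exact h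
    · exfalso
      have := hBK x₂ hx₂K.1 h.symm
      exact absurd hx₂K.2 (not_le.mpr (hqpos x₂ this.1 this.2))
  refine ⟨z₁, z₂, min (min ((d - r x₁)/2) ((r x₂ + d)/2)) (d/2), ?_, min_le_right _ _, hz₁₂, hz₂₁, ?_, ?_⟩
  · apply lt_min (lt_min (by linarith) (by linarith)) (by linarith)
  · intro x hx hrx
    by_contra h
    push_neg at h
    have hxK : x ∈ K₁ := ⟨hx, h⟩
    have h6 : r x ≤ r x₁ := hx₁max hxK
    have hmle : min (min ((d - r x₁)/2) ((r x₂ + d)/2)) (d/2) ≤ (d - r x₁)/2 :=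
      le_trans (min_le_left _ _) (min_le_left _ _)
    linarith
  · intro x hx hrx
    by_contra h
    push_neg at h
    have hxK : x ∈ K₂ := ⟨hx, h⟩
    have h6 : r x₂ ≤ r x := hx₂min hxK
    have hmle : min (min ((d - r x₁)/2) ((r x₂ + d)/2)) (d/2) ≤ (r x₂ + d)/2 :=
      le_trans (min_le_left _ _) (min_le_right _ _)
    linarith

set_option maxHeartbeats 1000000 in
theorem min_implies_alternance (f : ℝ → ℝ) (hf : Continuous f)
    (hper : Function.Periodic f π)
    (gbar : ℝ → ℝ) (hgbar : gbar ∈ EllipseLog)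
    (hmin : ∀ g ∈ EllipseLog, supDist f gbar ≤ supDist f g) :
    ∃ φ₁ ψ₁ φ₂ ψ₂ : ℝ, φ₁ < ψ₁ ∧ ψ₁ < φ₂ ∧ φ₂ < ψ₂ ∧ ψ₂ < φ₁ + π ∧
      f φ₁ - gbar φ₁ = supDist f gbar ∧ f φ₂ - gbar φ₂ = supDist f gbar ∧
      gbar ψ₁ - f ψ₁ = supDist f gbar ∧ gbar ψ₂ - f ψ₂ = supDist f gbar := by
  obtain ⟨a, b, c, ha, habc, hg⟩ := hgbar
  set D : ℝ → ℝ := fun φ => a + b * cos (2*φ) + c * sin (2*φ) with hD_def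
  have hg' : ∀ φ, gbar φ = -(1/2) * log (D φ) := fun φ => by rw [hg]
  set m : ℝ := a - Real.sqrt (b^2+c^2) with hm_def
  have hm : 0 < m := by
    have : Real.sqrt (b^2+c^2) < a := by
      rw [show a = Real.sqrt (a^2) from (Real.sqrt_sq ha.le).symm]
      exact Real.sqrt_lt_sqrt (by positivity) habc
    simp only [hm_def]; linarith
  have hDm : ∀ x, m ≤ D x := fun x => by
    have := absLin b c (2*x); simp only [hD_def, hm_def]; linarith
  have hDpos : ∀ x, 0 < D x := fun x => lt_of_lt_of_le hm (hDm x)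
  have hgcont : Continuous gbar := by
    rw [hg]; exact continuous_const.mul ((contD a b c).log (fun x => (hDpos x).ne'))
  have hDper : ∀ x, D (x + π) = D x := perD a b c
  clear_value m D
  have hgper : ∀ x, gbar (x + π) = gbar x := by
    intro x
    rw [hg' (x+π), hg' x, hDper x]
  have hrper : Function.Periodic (fun x => f x - gbar x) π := fun x => by
    show f (x + π) - gbar (x + π) = f x - gbar x
    rw [hper x, hgper x]
  have hrcont : Continuous (fun x => f x - gbar x) := hf.sub hgcont
  obtain ⟨x₀, hx₀mem, hx₀max, hx₀sup⟩ := periodic_max (fun x => |f x - gbar x|) hrcont.abs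
    (fun x => by show |f (x + π) - gbar (x + π)| = |f x - gbar x|; rw [hper x, hgper x]) 0
  set d := supDist f gbar with hd_def
  have hsd : d = |f x₀ - gbar x₀| := hx₀sup
  clear_value d
  have hrd : ∀ y, |f y - gbar y| ≤ d := by rw [hsd]; exact hx₀max
  rcases eq_or_lt_of_le (le_trans (abs_nonneg (f x₀ - gbar x₀)) (le_of_eq hsd.symm)) with hd0 | hd
  · -- trivial case : d = 0
    have hz : ∀ y, f y - gbar y = 0 := fun y =>
      abs_eq_zero.mp (le_antisymm (le_trans (hrd y) (le_of_eq hd0.symm)) (abs_nonneg _))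
    refine ⟨0, π/4, π/2, 3*π/4, by linarith [pi_pos], by linarith [pi_pos],
      by linarith [pi_pos], by linarith [pi_pos], ?_, ?_, ?_, ?_⟩ <;>
    · rw [← hd0]
      first
      | exact hz _
      | (have := hz (π/4); linarith)
      | (have := hz (3*π/4); linarith)
  · -- main case : d > 0
    obtain ⟨p, -, hpmax, -⟩ := periodic_max (fun x => f x - gbar x) hrcont hrper 0
    obtain ⟨q0, -, hqmax, -⟩ := periodic_max (fun x => -(f x - gbar x)) hrcont.neg
      (fun x => by show -(f (x+π) - gbar (x+π)) = -(f x - gbar x); rw [hper x, hgper x]) 0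
    have hqmin : ∀ y, f q0 - gbar q0 ≤ f y - gbar y := fun y => by
      have := hqmax y; linarith
    have hpmax' : ∀ y, f y - gbar y ≤ f p - gbar p := fun y => by
      have := hpmax y; simpa using this
    -- the shifted competitor shows both extremes are attained
    set t₀ : ℝ := ((f p - gbar p) + (f q0 - gbar q0))/2 with ht₀
    set lam : ℝ := Real.exp (-(2*t₀)) with hlam
    have hlam0 : 0 < lam := Real.exp_pos _
    have hDlam : ∀ φ : ℝ, lam * a + lam*b*cos (2*φ) + lam*c*sin (2*φ) = lam * D φ := by
      intro φ; simp only [hD_def]; ring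
    have hmem' : (fun φ : ℝ => -(1 / 2) * log ((lam*a) + (lam*b) * cos (2 * φ) + (lam*c) * sin (2 * φ)))
        ∈ EllipseLog := by
      apply mem_of_pos
      intro φ
      rw [hDlam φ]
      exact mul_pos hlam0 (hDpos φ)
    have heqg : ∀ φ : ℝ, -(1 / 2) * log ((lam*a) + (lam*b) * cos (2 * φ) + (lam*c) * sin (2 * φ))
        = gbar φ + t₀ := by
      intro φ
      rw [hDlam φ, Real.log_mul hlam0.ne' (hDpos φ).ne', hg' φ, hlam, Real.log_exp]
      ring
    have hsup' : supDist f (fun φ : ℝ => -(1 / 2) * log ((lam*a) + (lam*b) * cos (2 * φ) + (lam*c) * sin (2 * φ)))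
        ≤ ((f p - gbar p) - (f q0 - gbar q0))/2 := by
      apply ciSup_le
      intro y
      beta_reduce
      rw [heqg y]
      have h1 := hpmax' y
      have h2 := hqmin y
      have h3 : f y - (gbar y + t₀) = (f y - gbar y) - t₀ := by ring
      have hub : (f y - gbar y) - t₀ ≤ ((f p - gbar p) - (f q0 - gbar q0))/2 := by
        rw [ht₀]; linarith
      have hlb : -(((f p - gbar p) - (f q0 - gbar q0))/2) ≤ (f y - gbar y) - t₀ := by
        rw [ht₀]; linarith
      rw [h3, abs_le]
      exact ⟨hlb, hub⟩
    have hle := hmin _ hmem'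
    have hrpd : f p - gbar p ≤ d := le_trans (le_abs_self _) (hrd p)
    have hrqd : -d ≤ f q0 - gbar q0 := neg_le_of_abs_le (hrd q0)
    have hEp : f p - gbar p = d := by linarith
    have hEq : f q0 - gbar q0 = -d := by linarith
    by_contra hcon
    have hno : ∀ φ₁ ψ₁ φ₂ ψ₂ : ℝ, φ₁ < ψ₁ → ψ₁ < φ₂ → φ₂ < ψ₂ → ψ₂ < φ₁ + π →
        f φ₁ - gbar φ₁ = d → f φ₂ - gbar φ₂ = d →
        f ψ₁ - gbar ψ₁ = -d → f ψ₂ - gbar ψ₂ = -d → False := by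
      intro φ₁ ψ₁ φ₂ ψ₂ h1 h2 h3 h4 e1 e2 e3 e4
      exact hcon ⟨φ₁, ψ₁, φ₂, ψ₂, h1, h2, h3, h4, e1, e2, by linarith, by linarith⟩
    obtain ⟨z₁, z₂, η, hη0, hηd, hz12, hz21, hsgnA, hsgnB⟩ :=
      alternance_sep (fun x => f x - gbar x) hrcont hrper d hd hrd p q0 hEp hEq hno
    -- choose the size of the perturbation
    set t : ℝ := (m/4) * min 1 (1 - Real.exp (-(2*η))) with ht_def
    have hexp1 : Real.exp (-(2*η)) < 1 := Real.exp_lt_one_iff.mpr (by linarith)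
    have ht0 : 0 < t := by
      rw [ht_def]
      exact mul_pos (by linarith) (lt_min one_pos (by linarith))
    have ht4 : t ≤ m/4 := by
      rw [ht_def]
      nlinarith [min_le_left (1:ℝ) (1 - Real.exp (-(2*η)))]
    have ht2 : 2*t ≤ (m/2) * (1 - Real.exp (-(2*η))) := by
      have h1 : min 1 (1 - Real.exp (-(2*η))) ≤ 1 - Real.exp (-(2*η)) := min_le_right _ _
      rw [ht_def]
      nlinarith
    clear_value t
    have hqb : ∀ x : ℝ, |cos (2*x - (z₁+z₂)) - cos (z₂-z₁)| ≤ 2 := by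
      intro x
      have h1 := Real.neg_one_le_cos (2*x - (z₁+z₂))
      have h2 := Real.cos_le_one (2*x - (z₁+z₂))
      have h3 := Real.neg_one_le_cos (z₂-z₁)
      have h4 := Real.cos_le_one (z₂-z₁)
      rw [abs_le]
      constructor <;> linarith
    -- the perturbed denominator
    have hDt_low : ∀ x : ℝ, m/2 ≤ D x + t * (cos (2*x - (z₁+z₂)) - cos (z₂-z₁)) := by
      intro x
      have h1 := hqb x
      rw [abs_le] at h1
      have h5 : -(2*t) ≤ t * (cos (2*x - (z₁+z₂)) - cos (z₂-z₁)) := by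
        nlinarith [mul_nonneg ht0.le (show (0:ℝ) ≤ cos (2*x - (z₁+z₂)) - cos (z₂-z₁) + 2 by linarith)]
      linarith only [h5, hDm x, ht4]
    have hDtpos : ∀ x : ℝ, 0 < D x + t * (cos (2*x - (z₁+z₂)) - cos (z₂-z₁)) :=
      fun x => lt_of_lt_of_le (by linarith) (hDt_low x)
    -- bounds on the ratio
    have hratio : ∀ x : ℝ,
        Real.exp (-(2*η)) < (D x + t * (cos (2*x - (z₁+z₂)) - cos (z₂-z₁))) / D x ∧
        (D x + t * (cos (2*x - (z₁+z₂)) - cos (z₂-z₁))) / D x < Real.exp (2*η) := by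
      intro x
      have hq1 := hqb x
      rw [abs_le] at hq1
      have hDx := hDpos x
      have hDmx := hDm x
      have he1 : 1 - Real.exp (-(2*η)) < 2*η := by
        have := Real.add_one_lt_exp (show -(2*η) ≠ 0 by intro h; nlinarith)
        linarith
      have he2 : (1:ℝ) + 2*η < Real.exp (2*η) := by
        have := Real.add_one_lt_exp (show (2*η) ≠ 0 by intro h; nlinarith)
        linarith
      have hnum_up : t * (cos (2*x - (z₁+z₂)) - cos (z₂-z₁)) ≤ 2*t := by
        nlinarith [mul_nonneg ht0.le (show (0:ℝ) ≤ 2 - (cos (2*x - (z₁+z₂)) - cos (z₂-z₁)) by linarith)]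
      have hnum_lo : -(2*t) ≤ t * (cos (2*x - (z₁+z₂)) - cos (z₂-z₁)) := by
        nlinarith [mul_nonneg ht0.le (show (0:ℝ) ≤ cos (2*x - (z₁+z₂)) - cos (z₂-z₁) + 2 by linarith)]
      have h2tm : 2*t ≤ D x * ((1 - Real.exp (-(2*η)))/2) := by
        calc 2*t ≤ (m/2) * (1 - Real.exp (-(2*η))) := ht2
        _ ≤ D x * ((1 - Real.exp (-(2*η)))/2) := by
          nlinarith [mul_nonneg (sub_nonneg.mpr hDmx) (sub_nonneg.mpr hexp1.le)]
      constructor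
      · rw [lt_div_iff₀ hDx]
        nlinarith [mul_pos hDx (sub_pos.mpr hexp1)]
      · rw [div_lt_iff₀ hDx]
        nlinarith [mul_lt_mul_of_pos_left he1 hDx, mul_lt_mul_of_pos_left he2 hDx,
          mul_nonneg hDx.le hη0.le]
    -- logarithmic bound
    have hLlog : ∀ x : ℝ,
        |log ((D x + t * (cos (2*x - (z₁+z₂)) - cos (z₂-z₁))) / D x)| < 2*η := by
      intro x
      obtain ⟨hlo, hup⟩ := hratio x
      have hrp : 0 < (D x + t * (cos (2*x - (z₁+z₂)) - cos (z₂-z₁))) / D x :=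
        div_pos (hDtpos x) (hDpos x)
      rw [abs_lt]
      constructor
      · have := Real.log_lt_log (Real.exp_pos (-(2*η))) hlo
        rwa [Real.log_exp] at this
      · have := Real.log_lt_log hrp hup
        rwa [Real.log_exp] at this
    -- the perturbed ellipse
    set a' : ℝ := a - t * cos (z₂ - z₁) with ha'_def
    set b' : ℝ := b + t * cos (z₁ + z₂) with hb'_def
    set c' : ℝ := c + t * sin (z₁ + z₂) with hc'_def
    have hDt_eq : ∀ x : ℝ, a' + b' * cos (2*x) + c' * sin (2*x)
        = D x + t * (cos (2*x - (z₁+z₂)) - cos (z₂-z₁)) := by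
      intro x
      rw [Real.cos_sub]
      simp only [hD_def, ha'_def, hb'_def, hc'_def]
      ring
    have hmem2 : (fun φ : ℝ => -(1 / 2) * log (a' + b' * cos (2 * φ) + c' * sin (2 * φ)))
        ∈ EllipseLog := by
      apply mem_of_pos
      intro φ
      rw [hDt_eq φ]
      exact hDtpos φ
    have hfgt : ∀ x : ℝ, f x - (-(1 / 2) * log (a' + b' * cos (2 * x) + c' * sin (2 * x)))
        = (f x - gbar x) + (1/2) * log ((D x + t * (cos (2*x - (z₁+z₂)) - cos (z₂-z₁))) / D x) := by
      intro x
      rw [hDt_eq x, Real.log_div (hDtpos x).ne' (hDpos x).ne', hg' x]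
      ring
    -- maximum of the perturbed distance
    obtain ⟨y, hyK, hymax, hysup⟩ := periodic_max
      (fun x => |f x - (-(1 / 2) * log (a' + b' * cos (2 * x) + c' * sin (2 * x)))|)
      (hf.sub (continuous_const.mul ((contD a' b' c').log
        (fun x => by rw [hDt_eq x]; exact (hDtpos x).ne')))).abs
      (fun x => by
        have h2 : 2*(x+π) = 2*x + 2*π := by ring
        simp only [h2, Real.cos_add_two_pi, Real.sin_add_two_pi, hper x]) z₁
    have hlt : |f y - (-(1 / 2) * log (a' + b' * cos (2 * y) + c' * sin (2 * y)))| < d := by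
      have hLy := hLlog y
      rw [abs_lt] at hLy
      have hry_ub : f y - gbar y ≤ d := le_trans (le_abs_self _) (hrd y)
      have hry_lb : -d ≤ f y - gbar y := neg_le_of_abs_le (hrd y)
      by_cases h1 : d - η < f y - gbar y
      · have hqy : cos (2*y - (z₁+z₂)) - cos (z₂-z₁) < 0 := hsgnA y hyK h1
        have hDlt : D y + t * (cos (2*y - (z₁+z₂)) - cos (z₂-z₁)) < D y := by
          have := mul_neg_of_pos_of_neg ht0 hqy; linarith
        have hlog_neg : log ((D y + t * (cos (2*y - (z₁+z₂)) - cos (z₂-z₁))) / D y) < 0 :=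
          Real.log_neg (div_pos (hDtpos y) (hDpos y)) ((div_lt_one (hDpos y)).mpr hDlt)
        rw [abs_lt, hfgt y]
        constructor
        · linarith only [h1, hLy.1, hηd, hd, hry_ub]
        · linarith only [hlog_neg, hry_ub]
      · by_cases h2 : f y - gbar y < -d + η
        · have hqy : 0 < cos (2*y - (z₁+z₂)) - cos (z₂-z₁) := hsgnB y hyK h2
          have hDgt : D y < D y + t * (cos (2*y - (z₁+z₂)) - cos (z₂-z₁)) := by
            have := mul_pos ht0 hqy; linarith
          have hlog_pos : 0 < log ((D y + t * (cos (2*y - (z₁+z₂)) - cos (z₂-z₁))) / D y) :=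
            Real.log_pos ((one_lt_div (hDpos y)).mpr hDgt)
          rw [abs_lt, hfgt y]
          constructor
          · linarith only [hlog_pos, hry_lb]
          · linarith only [h2, hLy.2, hηd, hd]
        · push_neg at h1 h2
          rw [abs_lt, hfgt y]
          constructor
          · linarith only [h2, hLy.1]
          · linarith only [h1, hLy.2]
    have hfin : supDist f (fun φ : ℝ => -(1 / 2) * log (a' + b' * cos (2 * φ) + c' * sin (2 * φ))) < d := by
      calc supDist f (fun φ : ℝ => -(1 / 2) * log (a' + b' * cos (2 * φ) + c' * sin (2 * φ)))
          = |f y - (-(1 / 2) * log (a' + b' * cos (2 * y) + c' * sin (2 * y)))| := hysup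
        _ < d := hlt
    have := hmin _ hmem2
    linarith
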